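/- Let n be an odd integer, n ≥ 3. Every family Q of 3-element subsets of [n] that determines a non-minority ball satisfies 2·|Q| ≥ C(n,3), i.e., |Q| ≥ (1/2)·binomial(n,3). -/

import Mathlib

/-- `b` is a majority ball of `A` under coloring `c`:
strictly more than `|A|/2` balls of `A` have color `c b`. -/
def majBall {n : ℕ} (c : Fin n → Bool) (A : Finset (Fin n)) (b : Fin n) : Prop :=
  b ∈ A ∧ A.card < 2 * (A.filter fun x => c x = c b).card

/-- `b` is a non-minority ball of `A` under coloring `c`:
at least `|A|/2` balls of `A` have color `c b`. -/
def nonMinBall {n : ℕ} (c : Fin n → Bool) (A : Finset (Fin n)) (b : Fin n) : Prop :=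
  b ∈ A ∧ A.card ≤ 2 * (A.filter fun x => c x = c b).card

/-- A coloring `c` is legal for the answer function `a` on the query set `Q`. -/
def Legal {n : ℕ} (Q : Finset (Finset (Fin n))) (a : Finset (Fin n) → Fin n)
    (c : Fin n → Bool) : Prop :=
  ∀ T ∈ Q, majBall c T (a T)

/-- The query set `Q` determines a non-minority ball. -/
def Determines {n : ℕ} (Q : Finset (Finset (Fin n))) : Prop :=
  ∀ a : Finset (Fin n) → Fin n, (∀ T ∈ Q, a T ∈ T) → (∃ c, Legal Q a c) →
    ∃ b : Fin n, ∀ c : Fin n → Bool, Legal Q a c → nonMinBall c Finset.univ b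

/-- Co-degree: the number of queries of `Q` containing both `x` and `y`. -/
def codeg {n : ℕ} (Q : Finset (Finset (Fin n))) (x y : Fin n) : ℕ :=
  (Q.filter fun T => x ∈ T ∧ y ∈ T).card

abbrev col1 : Fin 4 → Bool := fun τ => decide (τ = 0 ∨ τ = 3)
abbrev col2 : Fin 4 → Bool := fun τ => decide (τ = 2)
abbrev col3 : Fin 4 → Bool := fun τ => decide (τ = 1 ∨ τ = 3)

abbrev share (u v w : Fin 4) : Prop :=
  (col1 v = col1 u ∨ col1 w = col1 u) ∧ (col2 v = col2 u ∨ col2 w = col2 u) ∧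
    (col3 v = col3 u ∨ col3 w = col3 u)

lemma share_key (u v w : Fin 4) :
    ((u = 0 ∨ v = 0 ∨ w = 0) ∧ (u = 1 ∨ v = 1 ∨ w = 1) ∧ (u = 2 ∨ v = 2 ∨ w = 2)) ∨
      share u v w ∨ share v u w ∨ share w u v := by
  revert u v w; decide

lemma majBall_of_partner {n : ℕ} {c : Fin n → Bool} {T : Finset (Fin n)} (hT : T.card = 3)
    {x y : Fin n} (hx : x ∈ T) (hy : y ∈ T) (hxy : x ≠ y) (hc : c y = c x) :
    majBall c T x := by
  refine ⟨hx, ?_⟩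
  have hsub : ({x, y} : Finset (Fin n)) ⊆ T.filter fun z => c z = c x := by
    intro u hu
    rcases Finset.mem_insert.mp hu with rfl | hu
    · exact Finset.mem_filter.mpr ⟨hx, rfl⟩
    · rw [Finset.mem_singleton] at hu; subst hu; exact Finset.mem_filter.mpr ⟨hy, hc⟩
  have h2 : 2 ≤ (T.filter fun z => c z = c x).card := by
    have hle := Finset.card_le_card hsub
    rwa [Finset.card_insert_of_notMem (by simpa using hxy), Finset.card_singleton] at hle
  omega

lemma two_mul_choose_two (n : ℕ) : 2 * n.choose 2 = n * (n - 1) := by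
  induction n with
  | zero => simp
  | succ m ih =>
    rw [Nat.choose_succ_succ]
    cases m with
    | zero => simp
    | succ l =>
      rw [Nat.mul_add, ih]
      simp only [Nat.succ_sub_one, Nat.choose_one_right]
      ring

lemma six_mul_choose_three (n : ℕ) : 6 * n.choose 3 = n * (n - 1) * (n - 2) := by
  induction n with
  | zero => simp
  | succ m ih =>
    rw [Nat.choose_succ_succ, Nat.mul_add, ih]
    have h2 := two_mul_choose_two m
    cases m with
    | zero => simp
    | succ l =>
      cases l with
      | zero => simp
      | succ j =>
        simp only [Nat.succ_sub_one] at *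
        have e1 : j + 1 + 1 - 2 = j := by omega
        have e2 : j + 1 + 1 + 1 - 2 = j + 1 := by omega
        rw [e1, e2]
        nlinarith [h2]

lemma codeg_ge {n k : ℕ} (hn : n = 2 * k + 1) (hk : 1 ≤ k) {Q : Finset (Finset (Fin n))}
    (hQ3 : ∀ T ∈ Q, T.card = 3) (hdet : Determines Q) {p g : Fin n} (hpg : p ≠ g) :
    k ≤ codeg Q p g := by
  classical
  by_contra hlt
  push_neg at hlt
  -- the set of balls b outside {p,g}
  set base : Finset (Fin n) := Finset.univ.filter (fun b => b ≠ p ∧ b ≠ g) with hbase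
  have hbase_eq : base = Finset.univ \ {p, g} := by
    ext u; simp [hbase, not_or]
  have hcard_pg : ({p, g} : Finset (Fin n)).card = 2 := by
    rw [Finset.card_insert_of_notMem (by simp [hpg]), Finset.card_singleton]
  have huniv : (Finset.univ : Finset (Fin n)).card = n := by simp
  have hbase_card : base.card = n - 2 := by
    rw [hbase_eq, Finset.card_sdiff_of_subset (Finset.subset_univ _), hcard_pg, huniv]
  -- bad balls: those forming a query with p,g
  have hBad : (base.filter fun b => ({p, g, b} : Finset (Fin n)) ∈ Q).card ≤ codeg Q p g := by
    apply Finset.card_le_card_of_injOn (fun b => ({p, g, b} : Finset (Fin n)))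
    · intro b hb
      rw [Finset.mem_coe, Finset.mem_filter] at hb
      exact Finset.mem_filter.mpr ⟨hb.2, by simp, by simp⟩
    · intro b1 hb1 b2 hb2 h
      rw [Finset.mem_coe, Finset.mem_filter, hbase] at hb1 hb2
      simp only [Finset.mem_filter] at hb1 hb2
      have : b1 ∈ ({p, g, b2} : Finset (Fin n)) := by
        rw [show ({p, g, b2} : Finset (Fin n)) = (fun b => ({p, g, b} : Finset (Fin n))) b2 from rfl, ← h]
        simp
      simp only [Finset.mem_insert, Finset.mem_singleton] at this
      rcases this with h' | h' | h'
      · exact absurd h' hb1.1.2.1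
      · exact absurd h' hb1.1.2.2
      · exact h'
  have hfneg := Finset.card_filter_add_card_filter_not
    (s := base) (p := fun b => ({p, g, b} : Finset (Fin n)) ∈ Q)
  have hS : k ≤ (base.filter fun b => ({p, g, b} : Finset (Fin n)) ∉ Q).card := by omega
  obtain ⟨B, hBsub, hBcard⟩ := Finset.exists_subset_card_eq hS
  have hBprop : ∀ b ∈ B, b ≠ p ∧ b ≠ g ∧ ({p, g, b} : Finset (Fin n)) ∉ Q := by
    intro b hb
    have := hBsub hb
    rw [Finset.mem_filter, hbase, Finset.mem_filter] at this
    exact ⟨this.1.2.1, this.1.2.2, this.2⟩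
  have hpB : p ∉ B := fun h => (hBprop p h).1 rfl
  have hgB : g ∉ B := fun h => (hBprop g h).2.1 rfl
  -- the type function
  set t : Fin n → Fin 4 :=
    fun x => if x = p then 0 else if x = g then 1 else if x ∈ B then 2 else 3 with ht
  have ht0 : ∀ u, t u = 0 ↔ u = p := by
    intro u; simp only [ht]; split_ifs with h1 h2 h3 <;> simp_all
  have ht1 : ∀ u, t u = 1 ↔ u = g := by
    intro u; simp only [ht]; split_ifs with h1 h2 h3 <;> simp_all
  have ht2 : ∀ u, t u = 2 ↔ u ∈ B := by
    intro u; simp only [ht]; split_ifs with h1 h2 h3 <;> simp_all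
  have ht3 : ∀ u, t u = 3 ↔ (u ≠ p ∧ u ≠ g ∧ u ∉ B) := by
    intro u; simp only [ht]; split_ifs with h1 h2 h3 <;> simp_all
  -- the three colorings
  set c1 : Fin n → Bool := fun x => col1 (t x) with hc1
  set c2 : Fin n → Bool := fun x => col2 (t x) with hc2
  set c3 : Fin n → Bool := fun x => col3 (t x) with hc3
  -- cardinalities of the color classes
  have hF0 : Finset.univ.filter (fun x => t x = 0) = {p} := by
    ext u; simp [ht0]
  have hF1 : Finset.univ.filter (fun x => t x = 1) = {g} := by
    ext u; simp [ht1]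
  have hF2 : Finset.univ.filter (fun x => t x = 2) = B := by
    ext u; simp [ht2]
  have hF3 : Finset.univ.filter (fun x => t x = 3) = Finset.univ \ insert p (insert g B) := by
    ext u; simp [ht3, not_or]; try tauto
  have hF3card : (Finset.univ.filter (fun x => t x = 3)).card = k - 1 := by
    rw [hF3, Finset.card_sdiff_of_subset (Finset.subset_univ _), huniv]
    rw [Finset.card_insert_of_notMem (by simp [hpg, hpB]),
      Finset.card_insert_of_notMem hgB, hBcard]
    omega
  have hc1card : (Finset.univ.filter fun x => c1 x = true).card = k := by
    have he : (Finset.univ.filter fun x => c1 x = true)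
        = Finset.univ.filter (fun x => t x = 0) ∪ Finset.univ.filter (fun x => t x = 3) := by
      ext u
      simp only [Finset.mem_filter, Finset.mem_union, hc1, col1, decide_eq_true_eq,
        Finset.mem_univ, true_and]
      try tauto
    rw [he, Finset.card_union_of_disjoint, hF0, hF3card]
    · simp; omega
    · rw [hF0]
      simp only [Finset.disjoint_singleton_left, Finset.mem_filter]
      rintro ⟨-, h⟩
      rw [ht0 p |>.mpr rfl] at h
      exact absurd h (by decide)
  have hc2card : (Finset.univ.filter fun x => c2 x = true).card = k := by
    have he : (Finset.univ.filter fun x => c2 x = true) = B := by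
      rw [← hF2]; ext u
      simp only [Finset.mem_filter, hc2, col2, decide_eq_true_eq]
    rw [he, hBcard]
  have hc3card : (Finset.univ.filter fun x => c3 x = true).card = k := by
    have he : (Finset.univ.filter fun x => c3 x = true)
        = Finset.univ.filter (fun x => t x = 1) ∪ Finset.univ.filter (fun x => t x = 3) := by
      ext u
      simp only [Finset.mem_filter, Finset.mem_union, hc3, col3, decide_eq_true_eq,
        Finset.mem_univ, true_and]
      try tauto
    rw [he, Finset.card_union_of_disjoint, hF1, hF3card]
    · simp; omega
    · rw [hF1]
      simp only [Finset.disjoint_singleton_left, Finset.mem_filter]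
      rintro ⟨-, h⟩
      rw [ht1 g |>.mpr rfl] at h
      exact absurd h (by decide)
  -- every query has a good answer
  have hgood : ∀ T ∈ Q, ∃ x, majBall c1 T x ∧ majBall c2 T x ∧ majBall c3 T x := by
    intro T hT
    obtain ⟨x, y, z, hxy, hxz, hyz, hTxyz⟩ := Finset.card_eq_three.mp (hQ3 T hT)
    have hxT : x ∈ T := by rw [hTxyz]; simp
    have hyT : y ∈ T := by rw [hTxyz]; simp
    have hzT : z ∈ T := by rw [hTxyz]; simp
    have main : ∀ u v w : Fin n, u ∈ T → v ∈ T → w ∈ T → u ≠ v → u ≠ w →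
        share (t u) (t v) (t w) → ∃ x, majBall c1 T x ∧ majBall c2 T x ∧ majBall c3 T x := by
      rintro u v w hu hv hw huv huw ⟨h1, h2, h3⟩
      refine ⟨u, ?_, ?_, ?_⟩
      · rcases h1 with h | h
        · exact majBall_of_partner (hQ3 T hT) hu hv huv h
        · exact majBall_of_partner (hQ3 T hT) hu hw huw h
      · rcases h2 with h | h
        · exact majBall_of_partner (hQ3 T hT) hu hv huv h
        · exact majBall_of_partner (hQ3 T hT) hu hw huw h
      · rcases h3 with h | h
        · exact majBall_of_partner (hQ3 T hT) hu hv huv h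
        · exact majBall_of_partner (hQ3 T hT) hu hw huw h
    have bad_elim : ∀ u v w : Fin n, u ∈ T → v ∈ T → w ∈ T →
        t u = 0 → t v = 1 → t w = 2 → False := by
      intro u v w hu hv hw h0 h1 h2
      have hup : u = p := (ht0 u).mp h0
      have hvg : v = g := (ht1 v).mp h1
      have hwB : w ∈ B := (ht2 w).mp h2
      obtain ⟨hwp, hwg, hwQ⟩ := hBprop w hwB
      have hpT : p ∈ T := by rw [← hup]; exact hu
      have hgT : g ∈ T := by rw [← hvg]; exact hv
      have hsub : ({p, g, w} : Finset (Fin n)) ⊆ T := by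
        rw [Finset.insert_subset_iff, Finset.insert_subset_iff, Finset.singleton_subset_iff]
        exact ⟨hpT, hgT, hw⟩
      have hcard : ({p, g, w} : Finset (Fin n)).card = 3 := by
        rw [Finset.card_insert_of_notMem (by simp [hpg, Ne.symm hwp]),
          Finset.card_insert_of_notMem (by simp [Ne.symm hwg]), Finset.card_singleton]
      have heq : ({p, g, w} : Finset (Fin n)) = T :=
        Finset.eq_of_subset_of_card_le hsub (by rw [hQ3 T hT, hcard])
      exact hwQ (heq ▸ hT)
    rcases share_key (t x) (t y) (t z) with ⟨h0, h1, h2⟩ | hsh | hsh | hsh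
    · exfalso
      rcases h0 with h0 | h0 | h0 <;> rcases h1 with h1 | h1 | h1 <;>
        rcases h2 with h2 | h2 | h2 <;>
        first
          | exact absurd (h0.symm.trans h1) (by decide)
          | exact absurd (h0.symm.trans h2) (by decide)
          | exact absurd (h1.symm.trans h2) (by decide)
          | exact bad_elim x y z hxT hyT hzT h0 h1 h2
          | exact bad_elim x z y hxT hzT hyT h0 h1 h2
          | exact bad_elim y x z hyT hxT hzT h0 h1 h2
          | exact bad_elim y z x hyT hzT hxT h0 h1 h2
          | exact bad_elim z x y hzT hxT hyT h0 h1 h2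
          | exact bad_elim z y x hzT hyT hxT h0 h1 h2
    · exact main x y z hxT hyT hzT hxy hxz hsh
    · exact main y x z hyT hxT hzT (Ne.symm hxy) hyz hsh
    · exact main z x y hzT hxT hyT (Ne.symm hxz) (Ne.symm hyz) hsh
  -- the answer function
  set a : Finset (Fin n) → Fin n :=
    fun T => if h : ∃ x, majBall c1 T x ∧ majBall c2 T x ∧ majBall c3 T x then h.choose else p
    with ha
  have haT : ∀ T ∈ Q, majBall c1 T (a T) ∧ majBall c2 T (a T) ∧ majBall c3 T (a T) := by
    intro T hT
    rw [ha]
    simp only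
    rw [dif_pos (hgood T hT)]
    exact (hgood T hT).choose_spec
  have hmem : ∀ T ∈ Q, a T ∈ T := fun T hT => ((haT T hT).1).1
  obtain ⟨b, hb⟩ := hdet a hmem ⟨c1, fun T hT => (haT T hT).1⟩
  have hleg1 : Legal Q a c1 := fun T hT => (haT T hT).1
  have hleg2 : Legal Q a c2 := fun T hT => (haT T hT).2.1
  have hleg3 : Legal Q a c3 := fun T hT => (haT T hT).2.2
  have hcases : t b = 0 ∨ t b = 1 ∨ t b = 2 ∨ t b = 3 := by
    have := (by decide : ∀ τ : Fin 4, τ = 0 ∨ τ = 1 ∨ τ = 2 ∨ τ = 3)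
    exact this (t b)
  have contra : ∀ c : Fin n → Bool, Legal Q a c → c b = true →
      (Finset.univ.filter fun x => c x = true).card = k → False := by
    intro c hleg hcb hcard
    obtain ⟨-, hnm⟩ := hb c hleg
    rw [huniv, hcb] at hnm
    rw [hcard] at hnm
    omega
  rcases hcases with htb | htb | htb | htb
  · exact contra c1 hleg1 (by rw [hc1]; simp [htb]) hc1card
  · exact contra c3 hleg3 (by rw [hc3]; simp [htb]) hc3card
  · exact contra c2 hleg2 (by rw [hc2]; simp [htb]) hc2card
  · exact contra c1 hleg1 (by rw [hc1]; simp [htb]) hc1card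

theorem stmt_5 (n : ℕ) (hodd : Odd n) (hn : 3 ≤ n) (Q : Finset (Finset (Fin n)))
    (hQ3 : ∀ T ∈ Q, T.card = 3) (hdet : Determines Q) :
    n.choose 3 ≤ 2 * Q.card := by
  classical
  obtain ⟨k0, hk0⟩ := hodd
  have hk' : n = 2 * k0 + 1 := by omega
  have hk1 : 1 ≤ k0 := by omega
  have hpair : ∀ pr ∈ (Finset.univ : Finset (Fin n)).offDiag, k0 ≤ codeg Q pr.1 pr.2 := by
    rintro ⟨x, y⟩ hpr
    have hxy : x ≠ y := (Finset.mem_offDiag.mp hpr).2.2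
    exact codeg_ge hk' hk1 hQ3 hdet hxy
  have hsum_ge : (Finset.univ : Finset (Fin n)).offDiag.card * k0 ≤
      ∑ pr ∈ (Finset.univ : Finset (Fin n)).offDiag, codeg Q pr.1 pr.2 := by
    have := Finset.card_nsmul_le_sum (Finset.univ : Finset (Fin n)).offDiag
      (fun pr => codeg Q pr.1 pr.2) k0 hpair
    simpa [smul_eq_mul] using this
  have hsum_eq : ∑ pr ∈ (Finset.univ : Finset (Fin n)).offDiag, codeg Q pr.1 pr.2
      = 6 * Q.card := by
    calc ∑ pr ∈ (Finset.univ : Finset (Fin n)).offDiag, codeg Q pr.1 pr.2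
        = ∑ pr ∈ (Finset.univ : Finset (Fin n)).offDiag, ∑ T ∈ Q,
            (if pr.1 ∈ T ∧ pr.2 ∈ T then 1 else 0) := by
          refine Finset.sum_congr rfl fun pr _ => ?_
          exact Finset.card_filter _ _
      _ = ∑ T ∈ Q, ∑ pr ∈ (Finset.univ : Finset (Fin n)).offDiag,
            (if pr.1 ∈ T ∧ pr.2 ∈ T then 1 else 0) := Finset.sum_comm
      _ = ∑ T ∈ Q, (6 : ℕ) := by
          refine Finset.sum_congr rfl fun T hT => ?_
          rw [← Finset.card_filter]
          have he : ((Finset.univ : Finset (Fin n)).offDiag.filter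
              fun pr => pr.1 ∈ T ∧ pr.2 ∈ T) = T.offDiag := by
            ext pr
            simp only [Finset.mem_filter, Finset.mem_offDiag, Finset.mem_univ, true_and]
            tauto
          rw [he, Finset.offDiag_card, hQ3 T hT]
      _ = 6 * Q.card := by rw [Finset.sum_const, smul_eq_mul, mul_comm]
  have hoff : (Finset.univ : Finset (Fin n)).offDiag.card = n * n - n := by
    rw [Finset.offDiag_card]; simp
  have hmain : (n * n - n) * k0 ≤ 6 * Q.card := by
    rw [← hoff, ← hsum_eq]; exact hsum_ge
  subst hk'
  have e3 : (2 * k0 + 1) * (2 * k0 + 1) - (2 * k0 + 1) = (2 * k0 + 1) * (2 * k0) :=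
    Nat.sub_eq_of_eq_add (by ring)
  rw [e3] at hmain
  have h6 : 6 * ((2 * k0 + 1).choose 3) = (2 * k0 + 1) * (2 * k0) * (2 * k0 - 1) := by
    rw [six_mul_choose_three]
    have e1 : 2 * k0 + 1 - 1 = 2 * k0 := by omega
    have e2 : 2 * k0 + 1 - 2 = 2 * k0 - 1 := by omega
    rw [e1, e2]
  have hchain : (2 * k0 + 1) * (2 * k0) * (2 * k0 - 1) ≤ 2 * ((2 * k0 + 1) * (2 * k0) * k0) := by
    have hr : 2 * ((2 * k0 + 1) * (2 * k0) * k0) = (2 * k0 + 1) * (2 * k0) * (2 * k0) := by ring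
    rw [hr]
    exact Nat.mul_le_mul (le_refl _) (by omega)
  have hfin : 6 * ((2 * k0 + 1).choose 3) ≤ 2 * (6 * Q.card) := by
    rw [h6]
    calc (2 * k0 + 1) * (2 * k0) * (2 * k0 - 1)
        ≤ 2 * ((2 * k0 + 1) * (2 * k0) * k0) := hchain
      _ = 2 * ((2 * k0 + 1) * (2 * k0) * k0) := rfl
      _ ≤ 2 * (6 * Q.card) := by
          refine Nat.mul_le_mul (le_refl 2) ?_
          rw [mul_assoc] at hmain ⊢
          exact hmain
  set c := (2 * k0 + 1).choose 3
  set q := Q.card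
  omega
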